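/- For every odd prime p, the quantity ℓ_p := ((∑_{a=1}^{p-1} a^(p-1)) - p - (p-1)!)/p² is an integer (the Lerch quotient). -/

import Mathlib

lemma lerch_prod_lemma (s : Finset ℕ) (f : ℕ → ℤ) (x : ℤ) :
    x ^ 2 ∣ (∏ a ∈ s, (1 + x * f a)) - (1 + x * ∑ a ∈ s, f a) := by
  classical
  induction s using Finset.induction with
  | empty => simp
  | @insert a s ha ih =>
    rw [Finset.prod_insert ha, Finset.sum_insert ha]
    obtain ⟨c, hc⟩ := ih
    have h : (1 + x * f a) * ∏ b ∈ s, (1 + x * f b)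
        - (1 + x * (f a + ∑ b ∈ s, f b))
        = (1 + x * f a) * ((∏ b ∈ s, (1 + x * f b)) - (1 + x * ∑ b ∈ s, f b))
          + x ^ 2 * (f a * ∑ b ∈ s, f b) := by ring
    rw [h, hc]
    exact dvd_add (dvd_mul_of_dvd_right (dvd_mul_right _ _) _) (dvd_mul_right _ _)

lemma lerch_pow_lemma (x : ℤ) : ∀ n : ℕ, x ^ 2 ∣ (1 + x) ^ n - (1 + n * x)
  | 0 => by simp
  | (n + 1) => by
    obtain ⟨c, hc⟩ := lerch_pow_lemma x n
    have h : (1 + x) ^ (n + 1) - (1 + (↑(n + 1) : ℤ) * x)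
        = (1 + x) * ((1 + x) ^ n - (1 + n * x)) + x ^ 2 * n := by push_cast; ring
    rw [h, hc]
    exact dvd_add (dvd_mul_of_dvd_right (dvd_mul_right _ _) _) (dvd_mul_right _ _)

theorem lerch_quotient_is_integer (p : ℕ) (hp : p.Prime) (hodd : Odd p) :
    ((p : ℤ) ^ 2) ∣ (∑ a ∈ Finset.Icc 1 (p - 1), (a : ℤ) ^ (p - 1)) - p
      - ((p - 1).factorial : ℤ) := by
  classical
  haveI : Fact p.Prime := ⟨hp⟩
  set n := p - 1 with hn
  have hp2 : 2 ≤ p := hp.two_le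
  have hpn : (n : ℤ) = (p : ℤ) - 1 := by
    have := Nat.succ_pred_eq_of_pos hp.pos
    push_cast [hn]
    omega
  -- Fermat: p ∣ a^n - 1 for a ∈ Icc 1 n
  have hferm : ∀ a ∈ Finset.Icc 1 n, (p : ℤ) ∣ (a : ℤ) ^ n - 1 := by
    intro a ha
    rw [Finset.mem_Icc] at ha
    have hane : (a : ZMod p) ≠ 0 := by
      rw [Ne, ZMod.natCast_eq_zero_iff]
      intro hd
      have := Nat.le_of_dvd (by omega) hd
      omega
    have := ZMod.pow_card_sub_one_eq_one hane
    have h0 : (((a : ℤ) ^ n - 1 : ℤ) : ZMod p) = 0 := by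
      push_cast [hn, this]; ring
    exact (ZMod.intCast_zmod_eq_zero_iff_dvd _ _).mp h0
  -- define q
  set q : ℕ → ℤ := fun a => ((a : ℤ) ^ n - 1) / p with hqdef
  have hq : ∀ a ∈ Finset.Icc 1 n, (a : ℤ) ^ n = 1 + p * q a := by
    intro a ha
    have := Int.ediv_mul_cancel (hferm a ha)
    simp only [hqdef]
    rw [mul_comm]
    omega
  -- Wilson: (p-1)! = p * w - 1
  have hwil : ((n.factorial : ZMod p) : ZMod p) = -1 := ZMod.wilsons_lemma p
  have hwdvd : (p : ℤ) ∣ (n.factorial : ℤ) + 1 := by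
    have : (((n.factorial : ℤ) + 1 : ℤ) : ZMod p) = 0 := by push_cast [hwil]; ring
    exact (ZMod.intCast_zmod_eq_zero_iff_dvd _ _).mp this
  obtain ⟨w, hw⟩ := hwdvd
  have hfac : (n.factorial : ℤ) = p * w - 1 := by omega
  set S := ∑ a ∈ Finset.Icc 1 n, q a with hS
  -- sum rewrite
  have hsum : (∑ a ∈ Finset.Icc 1 n, (a : ℤ) ^ n) = n + p * S := by
    rw [Finset.sum_congr rfl hq, Finset.sum_add_distrib, Finset.sum_const,
      Nat.card_Icc, ← Finset.mul_sum]
    simp [hS]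
  -- product identity
  have hprodid : (∏ a ∈ Finset.Icc 1 n, (a : ℤ) ^ n) = (n.factorial : ℤ) ^ n := by
    rw [Finset.prod_pow]
    congr 1
    rw [← Nat.cast_prod, ← Finset.Ico_add_one_right_eq_Icc, Finset.prod_Ico_id_eq_factorial]
  have hprod1 : (p : ℤ) ^ 2 ∣ (n.factorial : ℤ) ^ n - (1 + p * S) := by
    rw [← hprodid, Finset.prod_congr rfl hq]
    exact lerch_prod_lemma _ q p
  have heven : Even n := Nat.Odd.sub_odd hodd odd_one
  have hprod2 : (p : ℤ) ^ 2 ∣ (n.factorial : ℤ) ^ n - (1 + p * w) := by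
    rw [hfac]
    have hneg : ((p : ℤ) * w - 1) ^ n = (1 + (-(p * w))) ^ n := by
      have : ((p : ℤ) * w - 1) = -(1 + (-(p * w))) := by ring
      rw [this, heven.neg_pow]
    obtain ⟨c, hc⟩ := lerch_pow_lemma (-((p : ℤ) * w)) n
    have hkey : ((p : ℤ) * w - 1) ^ n - (1 + p * w)
        = (-((p : ℤ) * w)) ^ 2 * c + (-(p : ℤ) ^ 2 * w) := by
      rw [hneg, ← hc]
      have : ((n : ℤ)) = (p : ℤ) - 1 := hpn
      rw [this]; ring
    rw [hkey]
    refine dvd_add ⟨w ^ 2 * c, by ring⟩ ⟨-w, by ring⟩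
  have hdvdS : (p : ℤ) ^ 2 ∣ p * S - p * w := by
    have := dvd_sub hprod2 hprod1
    have heq : (n.factorial : ℤ) ^ n - (1 + p * w)
        - ((n.factorial : ℤ) ^ n - (1 + p * S)) = p * S - p * w := by ring
    rwa [heq] at this
  have hfinal : (∑ a ∈ Finset.Icc 1 n, (a : ℤ) ^ n) - p - (n.factorial : ℤ)
      = p * S - p * w := by
    rw [hsum, hfac, hpn]; ring
  rw [hfinal]
  exact hdvdS
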